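/- Let H : ℝ → (m×n real matrices) be differentiable and satisfy the matrix differential equation Ḣ(t) = −H(t) [ (H(t) ∘ H(t))ᵀ H(t) − H(t)ᵀ (H(t) ∘ H(t)) ] for all t, with H(0) H(0)ᵀ = I_m. Then H(t) H(t)ᵀ = I_m for all t. -/

import Mathlib

open Matrix

-- Equip matrices with the Frobenius norm, so that `HasDerivAt` makes sense.
attribute [local instance]
  Matrix.frobeniusSeminormedAddCommGroup Matrix.frobeniusNormedAddCommGroup
  Matrix.frobeniusIsBoundedSMul Matrix.frobeniusNormedSpace

noncomputable def mulCLM (m n k : ℕ) :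
    Matrix (Fin m) (Fin n) ℝ →L[ℝ] Matrix (Fin n) (Fin k) ℝ →L[ℝ] Matrix (Fin m) (Fin k) ℝ :=
  LinearMap.mkContinuous₂
    (LinearMap.mk₂ ℝ (fun A B => A * B) Matrix.add_mul (fun c A B => Matrix.smul_mul c A B)
      Matrix.mul_add (fun c A B => (Matrix.mul_smul A c B))) 1
    (by intro A B; simpa using Matrix.frobenius_norm_mul A B)

noncomputable def trCLM (m n : ℕ) :
    Matrix (Fin m) (Fin n) ℝ →L[ℝ] Matrix (Fin n) (Fin m) ℝ :=
  (Matrix.transposeLinearEquiv (Fin m) (Fin n) ℝ ℝ).toLinearMap.toContinuousLinearMap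

/-- The gradient flow `Ḣ = −H [(H∘H)ᵀH − Hᵀ(H∘H)]` of the permutation-penalty cost leaves
the set of matrices with orthonormal rows invariant: if `H(0) H(0)ᵀ = I_m` then
`H(t) H(t)ᵀ = I_m` for all `t`. Here `∘` is the Hadamard (entrywise) product. -/
theorem stmt_17 {m n : ℕ}
    (H : ℝ → Matrix (Fin m) (Fin n) ℝ)
    (hode : ∀ t : ℝ, HasDerivAt H
      (-(H t * ((Matrix.hadamard (H t) (H t))ᵀ * H t - (H t)ᵀ * Matrix.hadamard (H t) (H t)))) t)
    (h0 : H 0 * (H 0)ᵀ = 1) :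
    ∀ t : ℝ, H t * (H t)ᵀ = 1 := by
  set F : ℝ → Matrix (Fin m) (Fin m) ℝ := fun t => H t * (H t)ᵀ with hF
  have hT : ∀ t, HasDerivAt (fun s => (H s)ᵀ)
      (-(H t * ((Matrix.hadamard (H t) (H t))ᵀ * H t - (H t)ᵀ * Matrix.hadamard (H t) (H t))))ᵀ t := by
    intro t
    exact ((trCLM m n).hasFDerivAt.comp_hasDerivAt t (hode t))
  have hder : ∀ t, HasDerivAt F 0 t := by
    intro t
    have := (mulCLM m n m).hasDerivAt_of_bilinear (fun _ => hode t) (fun _ => hT t)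
    have key : (mulCLM m n m) (H t)
        (-(H t * ((Matrix.hadamard (H t) (H t))ᵀ * H t - (H t)ᵀ * Matrix.hadamard (H t) (H t))))ᵀ
      + (mulCLM m n m)
        (-(H t * ((Matrix.hadamard (H t) (H t))ᵀ * H t - (H t)ᵀ * Matrix.hadamard (H t) (H t))))
        ((H t)ᵀ)
      = 0 := by
      show H t * (-(H t * ((Matrix.hadamard (H t) (H t))ᵀ * H t - (H t)ᵀ * Matrix.hadamard (H t) (H t))))ᵀ
        + -(H t * ((Matrix.hadamard (H t) (H t))ᵀ * H t - (H t)ᵀ * Matrix.hadamard (H t) (H t))) * (H t)ᵀ = 0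
      simp only [Matrix.transpose_neg, Matrix.transpose_mul, Matrix.transpose_sub,
        Matrix.transpose_transpose, Matrix.mul_sub, Matrix.sub_mul, Matrix.mul_neg,
        Matrix.neg_mul, neg_sub, Matrix.mul_assoc]
      abel
    exact this.congr_deriv key
  have hconst : ∀ t, F t = F 0 := fun t =>
    is_const_of_deriv_eq_zero (fun s => (hder s).differentiableAt)
      (fun s => (hder s).deriv) t 0
  intro t
  calc H t * (H t)ᵀ = F 0 := hconst t
    _ = 1 := h0
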